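/- Let p_n be monic symmetric orthogonal polynomials defined by p_{-1} = 0, p_0 = 1, p_{n+1}(x) = x p_n(x) - a_n p_{n-1}(x) where (a_n)_{n≥1} is a positive increasing sequence (set a_0 = 0). Then for all n ≥ 1 and all real x, (x²/(x² + a_n - a_{n-1})) · p_n(x)² - p_{n-1}(x) p_{n+1}(x) ≥ 0. -/

import Mathlib

/-- Positivity of the sequence `a`. -/
lemma turan_aux_apos (a : ℕ → ℝ) (ha1 : 0 < a 1)
    (hinc : ∀ n : ℕ, 1 ≤ n → a n < a (n + 1)) :
    ∀ k : ℕ, 1 ≤ k → 0 < a k := by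
  intro k hk
  induction k, hk using Nat.le_induction with
  | base => exact ha1
  | succ n hn ih => exact ih.trans (hinc n hn)

/-- Classical Turán determinant positivity: `pₙ² - pₙ₋₁ pₙ₊₁ ≥ 0` for `n ≥ 1`. -/
lemma turan_aux_delta (a : ℕ → ℝ) (ha0 : a 0 = 0) (ha1 : 0 < a 1)
    (hinc : ∀ n : ℕ, 1 ≤ n → a n < a (n + 1))
    (p : ℕ → ℝ → ℝ) (hp0 : ∀ x, p 0 x = 1)
    (hrec : ∀ n : ℕ, ∀ x : ℝ, p (n + 1) x = x * p n x - a n * p (n - 1) x) :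
    ∀ k : ℕ, 1 ≤ k → ∀ x : ℝ, 0 ≤ p k x ^ 2 - p (k - 1) x * p (k + 1) x := by
  have h1 : ∀ x : ℝ, p 1 x = x := by
    intro x
    have := hrec 0 x
    simpa [hp0, ha0] using this
  intro k hk
  induction k, hk using Nat.le_induction with
  | base =>
    intro x
    have h2 : p 2 x = x * p 1 x - a 1 * p 0 x := by simpa using hrec 1 x
    simp only [Nat.sub_self]
    rw [h2, h1, hp0]
    nlinarith [ha1.le]
  | succ n hn ih =>
    intro x
    have h2 : p (n + 2) x = x * p (n + 1) x - a (n + 1) * p n x := by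
      simpa using hrec (n + 1) x
    simp only [Nat.add_sub_cancel]
    have key : p (n + 1) x ^ 2 - p n x * p (n + 2) x =
        a n * (p n x ^ 2 - p (n - 1) x * p (n + 1) x) + (a (n + 1) - a n) * p n x ^ 2 := by
      rw [h2, hrec n x]; ring
    have hap : 0 < a n := turan_aux_apos a ha1 hinc n hn
    have hmono : a n ≤ a (n + 1) := (hinc n hn).le
    nlinarith [mul_nonneg hap.le (ih x), mul_nonneg (sub_nonneg.2 hmono) (sq_nonneg (p n x))]

/-- Core algebraic inequality: with `q = x u - B v`, `r = x q - (B + d) u`,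
`d, B > 0` and the Turán determinant `u² - v q ≥ 0`, the numerator
`x² q² - (x² + d) u r` is nonnegative. -/
lemma turan_aux_quad (d B u v q r x : ℝ) (hd : 0 < d) (hB : 0 < B)
    (hΔ : 0 ≤ u ^ 2 - v * q) (hq : q = x * u - B * v) (hr : r = x * q - (B + d) * u) :
    0 ≤ x ^ 2 * q ^ 2 - (x ^ 2 + d) * (u * r) := by
  subst hr; subst hq
  rcases le_or_gt d (x ^ 2) with hx | hx
  · -- identity (B):  E = B (x² - d) Δ + d (2B + d) u² + d B² v²
    nlinarith [mul_nonneg (mul_nonneg hB.le (sub_nonneg.2 hx)) hΔ,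
      mul_nonneg (mul_nonneg hd.le (by linarith : (0:ℝ) ≤ 2 * B + d)) (sq_nonneg u),
      mul_nonneg (mul_nonneg hd.le (sq_nonneg B)) (sq_nonneg v)]
  · -- identity (C):  E = (dB + d² + Bx²) u² + B (d - x²) x u v + B² x² v², with disc ≤ 0
    have hx0 : (0:ℝ) ≤ x ^ 2 := sq_nonneg x
    have halpha : 0 < d * B + d ^ 2 + B * x ^ 2 := by nlinarith
    have hsq : (d - x ^ 2) ^ 2 ≤ d ^ 2 := by
      nlinarith [mul_nonneg hx0 (by linarith : (0:ℝ) ≤ 2 * d - x ^ 2)]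
    have h2' : 0 ≤ 4 * (d * B + d ^ 2 + B * x ^ 2) - (d - x ^ 2) ^ 2 := by
      nlinarith [mul_pos hB hd, mul_nonneg hB.le hx0, sq_nonneg d]
    have hdisc : 0 ≤ 4 * (d * B + d ^ 2 + B * x ^ 2) * B ^ 2 - B ^ 2 * (d - x ^ 2) ^ 2 := by
      nlinarith [mul_nonneg (sq_nonneg B) h2']
    have key : 4 * (d * B + d ^ 2 + B * x ^ 2) *
        (x ^ 2 * (x * u - B * v) ^ 2 -
          (x ^ 2 + d) * (u * (x * (x * u - B * v) - (B + d) * u))) =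
        (2 * (d * B + d ^ 2 + B * x ^ 2) * u + B * (d - x ^ 2) * x * v) ^ 2 +
          (4 * (d * B + d ^ 2 + B * x ^ 2) * B ^ 2 - B ^ 2 * (d - x ^ 2) ^ 2) *
            (x * v) ^ 2 := by ring
    have h4a : (0:ℝ) < 4 * (d * B + d ^ 2 + B * x ^ 2) := by linarith
    rw [← mul_nonneg_iff_of_pos_left h4a, key]
    have t1 := sq_nonneg (2 * (d * B + d ^ 2 + B * x ^ 2) * u + B * (d - x ^ 2) * x * v)
    have t2 := mul_nonneg hdisc (sq_nonneg (x * v))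
    linarith

theorem monic_symmetric_turan
    (a : ℕ → ℝ) (ha0 : a 0 = 0) (ha1 : 0 < a 1)
    (hinc : ∀ n : ℕ, 1 ≤ n → a n < a (n + 1))
    (p : ℕ → ℝ → ℝ) (hp0 : ∀ x, p 0 x = 1)
    (hrec : ∀ n : ℕ, ∀ x : ℝ, p (n + 1) x = x * p n x - a n * p (n - 1) x)
    (n : ℕ) (hn : 1 ≤ n) (x : ℝ) :
    x ^ 2 / (x ^ 2 + a n - a (n - 1)) * (p n x) ^ 2 - p (n - 1) x * p (n + 1) x ≥ 0 := by
  have h1 : ∀ x : ℝ, p 1 x = x := by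
    intro x
    have := hrec 0 x
    simpa [hp0, ha0] using this
  rcases Nat.lt_or_ge n 2 with hlt | hge
  · -- n = 1
    interval_cases n
    have h2 : p 2 x = x * p 1 x - a 1 * p 0 x := by simpa using hrec 1 x
    have hD : (0:ℝ) < x ^ 2 + a 1 := by positivity
    simp only [Nat.sub_self]
    rw [h2, h1, hp0, ha0]
    have key : x ^ 2 / (x ^ 2 + a 1 - 0) * x ^ 2 - 1 * (x * x - a 1 * 1) =
        a 1 ^ 2 / (x ^ 2 + a 1) := by
      rw [sub_zero]
      field_simp
      ring
    rw [key]
    positivity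
  · -- n ≥ 2
    obtain ⟨m, rfl⟩ : ∃ m, n = m + 2 := ⟨n - 2, by omega⟩
    have hB : 0 < a (m + 1) := turan_aux_apos a ha1 hinc (m + 1) (by omega)
    have hd : 0 < a (m + 2) - a (m + 1) := sub_pos.2 (hinc (m + 1) (by omega))
    have hΔ : 0 ≤ p (m + 1) x ^ 2 - p m x * p (m + 2) x := by
      have := turan_aux_delta a ha0 ha1 hinc p hp0 hrec (m + 1) (by omega) x
      simpa using this
    have hrecA : p (m + 2) x = x * p (m + 1) x - a (m + 1) * p m x := by
      simpa using hrec (m + 1) x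
    have hrecB : p (m + 3) x = x * p (m + 2) x -
        (a (m + 1) + (a (m + 2) - a (m + 1))) * p (m + 1) x := by
      have h' : m + 2 - 1 = m + 1 := rfl
      have := hrec (m + 2) x
      rw [h'] at this
      rw [this]; ring
    have hD : (0:ℝ) < x ^ 2 + a (m + 2) - a (m + 1) := by
      have : (0:ℝ) ≤ x ^ 2 := sq_nonneg x
      linarith
    have hE := turan_aux_quad (a (m + 2) - a (m + 1)) (a (m + 1)) (p (m + 1) x) (p m x)
      (p (m + 2) x) (p (m + 3) x) x hd hB (by linarith [hΔ]) hrecA hrecB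
    have goal_eq : x ^ 2 / (x ^ 2 + a (m + 2) - a (m + 2 - 1)) * p (m + 2) x ^ 2 -
        p (m + 2 - 1) x * p (m + 2 + 1) x =
        (x ^ 2 * p (m + 2) x ^ 2 -
          (x ^ 2 + (a (m + 2) - a (m + 1))) * (p (m + 1) x * p (m + 3) x)) /
          (x ^ 2 + a (m + 2) - a (m + 1)) := by
      have h' : m + 2 - 1 = m + 1 := rfl
      rw [h']
      rw [div_mul_eq_mul_div, eq_div_iff (ne_of_gt hD), sub_mul, div_mul_cancel₀]
      · ring
      · exact ne_of_gt hD
    rw [ge_iff_le, goal_eq]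
    exact div_nonneg (by linarith [hE]) hD.le
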